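/- Let ρ₁ = diag(1, 0) and ρ₂ = (1/2)·I be 2×2 quantum states. If a two-outcome POVM (Q₁, Q₂) on ℂ² satisfies min(Tr[ρ₁Q₁], Tr[ρ₂Q₂]) = 2/3 (the optimal minimax value), then Q₁ = diag(2/3, 0) and Q₂ = diag(1/3, 1). In particular, the unique optimal minimax POVM for this pair of states is not an orthogonal (projective) measurement, since Q₁ is not a projection. -/

import Mathlib

open Matrix ComplexOrder

/-- A quantum state on `ℂ^d`: a positive semidefinite matrix with unit trace. -/
def IsQState {d : ℕ} (ρ : Matrix (Fin d) (Fin d) ℂ) : Prop :=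
  ρ.PosSemidef ∧ ρ.trace = 1

/-- A two-outcome POVM: two positive semidefinite matrices summing to the identity. -/
def IsPOVM2 {d : ℕ} (P₁ P₂ : Matrix (Fin d) (Fin d) ℂ) : Prop :=
  P₁.PosSemidef ∧ P₂.PosSemidef ∧ P₁ + P₂ = 1

/-- `(B₁, B₂)` is Bayes-optimal for the prior `(a, 1-a)` and states `ρ₁, ρ₂`:
it is a POVM maximizing `a·Tr[ρ₁P₁] + (1-a)·Tr[ρ₂P₂]` over all two-outcome POVMs. -/
def IsBayesOpt {d : ℕ} (ρ₁ ρ₂ : Matrix (Fin d) (Fin d) ℂ) (a : ℝ)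
    (B₁ B₂ : Matrix (Fin d) (Fin d) ℂ) : Prop :=
  IsPOVM2 B₁ B₂ ∧ ∀ P₁ P₂ : Matrix (Fin d) (Fin d) ℂ, IsPOVM2 P₁ P₂ →
    a * ((ρ₁ * P₁).trace.re) + (1 - a) * ((ρ₂ * P₂).trace.re) ≤
      a * ((ρ₁ * B₁).trace.re) + (1 - a) * ((ρ₂ * B₂).trace.re)

/-- For `ρ₁ = diag(1,0)` and `ρ₂ = (1/2)·I`, any two-outcome POVM attaining
the optimal minimax value `2/3` must equal `(diag(2/3,0), diag(1/3,1))`; in particular the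
unique optimal minimax POVM is not a projective measurement, since its first element is not
a projection. -/
theorem minimax_optimal_povm_unique_and_nonorthogonal
    (ρ₁ ρ₂ : Matrix (Fin 2) (Fin 2) ℂ)
    (hρ₁ : ρ₁ = !![1, 0; 0, 0]) (hρ₂ : ρ₂ = !![1/2, 0; 0, 1/2])
    (Q₁ Q₂ : Matrix (Fin 2) (Fin 2) ℂ)
    (hQ : IsPOVM2 Q₁ Q₂)
    (hopt : min ((ρ₁ * Q₁).trace.re) ((ρ₂ * Q₂).trace.re) = 2 / 3) :
    Q₁ = !![2/3, 0; 0, 0] ∧ Q₂ = !![1/3, 0; 0, 1] ∧ Q₁ * Q₁ ≠ Q₁ := by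
  obtain ⟨h1, h2, h12⟩ := hQ
  have hQ2 : Q₂ = 1 - Q₁ := by
    rw [← h12]; abel
  subst hρ₁ hρ₂ hQ2
  -- trace computations
  have ht1 : ((!![(1:ℂ), 0; 0, 0]) * Q₁).trace = Q₁ 0 0 := by
    simp [Matrix.trace, Matrix.mul_apply, Fin.sum_univ_two, Matrix.vecMul, dotProduct]
  have ht2 : ((!![(1:ℂ)/2, 0; 0, 1/2]) * (1 - Q₁)).trace
      = 1 - (Q₁ 0 0 + Q₁ 1 1) / 2 := by
    simp [Matrix.trace, Matrix.mul_apply, Fin.sum_univ_two, Matrix.sub_apply,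
      Matrix.one_apply, Matrix.vecMul, dotProduct]
    ring
  rw [ht1, ht2] at hopt
  have hd0 : 0 ≤ Q₁ 0 0 := by
    have := h1.dotProduct_mulVec_nonneg (Pi.single 0 1)
    simpa [dotProduct, mulVec, Pi.single_apply, Fin.sum_univ_two] using this
  have hd1 : 0 ≤ Q₁ 1 1 := by
    have := h1.dotProduct_mulVec_nonneg (Pi.single 1 1)
    simpa [dotProduct, mulVec, Pi.single_apply, Fin.sum_univ_two] using this
  have him0 : (Q₁ 0 0).im = 0 := by
    have := hd0.2; simpa using this.symm
  have him1 : (Q₁ 1 1).im = 0 := by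
    have := hd1.2; simpa using this.symm
  have hge1 : 2/3 ≤ (Q₁ 0 0).re := by
    have := min_le_left ((Q₁ 0 0).re) ((1 - (Q₁ 0 0 + Q₁ 1 1) / 2).re)
    rw [hopt] at this; exact this
  have hge2 : 2/3 ≤ (1 - (Q₁ 0 0 + Q₁ 1 1) / 2).re := by
    have := min_le_right ((Q₁ 0 0).re) ((1 - (Q₁ 0 0 + Q₁ 1 1) / 2).re)
    rw [hopt] at this; exact this
  have hge2' : (Q₁ 0 0).re + (Q₁ 1 1).re ≤ 2/3 := by
    simp [Complex.sub_re, Complex.div_re, Complex.add_re] at hge2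
    linarith
  have hd1re : 0 ≤ (Q₁ 1 1).re := hd1.1
  have ha : (Q₁ 0 0).re = 2/3 := by linarith
  have hdre : (Q₁ 1 1).re = 0 := by linarith
  have ha' : Q₁ 0 0 = 2/3 := by
    apply Complex.ext <;> simp [ha, him0]
  have hd' : Q₁ 1 1 = 0 := by
    apply Complex.ext <;> simp [hdre, him1]
  -- off-diagonal zero
  have hherm := h1.1
  have hc : Q₁ 1 0 = starRingEnd ℂ (Q₁ 0 1) := by
    have := congrFun (congrFun hherm 1) 0
    simpa [Matrix.conjTranspose_apply] using this.symm
  have hb : Q₁ 0 1 = 0 := by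
    by_contra hb
    set b := Q₁ 0 1 with hbdef
    have key := h1.dotProduct_mulVec_nonneg ![-b, 1]
    have : star (![-b, 1]) ⬝ᵥ (Q₁ *ᵥ ![-b, 1])
        = -(4/3) * (Complex.normSq b : ℂ) := by
      simp [dotProduct, mulVec, Fin.sum_univ_two, ha', hd', hc, ← hbdef]
      ring_nf
      rw [mul_comm ((starRingEnd ℂ) b) b, Complex.mul_conj]
    rw [this] at key
    have hre := key.1
    simp [Complex.mul_re] at hre
    have : Complex.normSq b ≤ 0 := by nlinarith [hre]
    exact hb (by simpa [Complex.normSq_eq_zero] using le_antisymm this (Complex.normSq_nonneg b))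
  have hc' : Q₁ 1 0 = 0 := by simp [hc, hb]
  have hQ1 : Q₁ = !![2/3, 0; 0, 0] := by
    ext i j
    fin_cases i <;> fin_cases j <;> simp [ha', hb, hc', hd']
  refine ⟨hQ1, ?_, ?_⟩
  · rw [hQ1]
    ext i j
    fin_cases i <;> fin_cases j <;> simp [Matrix.one_apply] <;> norm_num
  · rw [hQ1]
    intro h
    have := congrFun (congrFun h 0) 0
    simp [Matrix.mul_apply, Fin.sum_univ_two] at this
    norm_num at this
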